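/- If all eigenvalues of Sigma_hat Sigma^{-1} lie in [1-eps, 1+eps] with eps = 1/sqrt(2d) (Sigma, Sigma_hat positive definite), then det(Sigma Sigma_hat^{-1}) / ((tr(Sigma Sigma_hat^{-1})/d)^d >= ((1-eps)(1+eps))^d = (1 - 1/(2d))^d >= 1/2. -/

import Mathlib

open Matrix

lemma dot_self_eig {d : ℕ} {B : Matrix (Fin d) (Fin d) ℝ} (hB : B.IsHermitian) (i : Fin d) :
    dotProduct ⇑(hB.eigenvectorBasis i) ⇑(hB.eigenvectorBasis i) = 1 := by
  have h := hB.eigenvectorBasis.orthonormal.1 i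
  have : (inner (𝕜 := ℝ) (hB.eigenvectorBasis i) (hB.eigenvectorBasis i)) = 1 := by
    rw [real_inner_self_eq_norm_sq, h]; norm_num
  rw [EuclideanSpace.inner_eq_star_dotProduct] at this
  simpa using this

lemma eig_le {d : ℕ} {B : Matrix (Fin d) (Fin d) ℝ} (hB : B.IsHermitian) {c : ℝ}
    (h : ((1 : Matrix (Fin d) (Fin d) ℝ) - c • B).PosSemidef) (i : Fin d) :
    c * hB.eigenvalues i ≤ 1 := by
  have h2 := h.dotProduct_mulVec_nonneg ⇑(hB.eigenvectorBasis i)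
  rw [sub_mulVec, one_mulVec, smul_mulVec, hB.mulVec_eigenvectorBasis] at h2
  simp only [star_trivial, dotProduct_sub, dotProduct_smul, smul_eq_mul, smul_smul,
    dot_self_eig hB i] at h2
  linarith

lemma eig_ge {d : ℕ} {B : Matrix (Fin d) (Fin d) ℝ} (hB : B.IsHermitian) {c : ℝ}
    (h : (c • B - (1 : Matrix (Fin d) (Fin d) ℝ)).PosSemidef) (i : Fin d) :
    1 ≤ c * hB.eigenvalues i := by
  have h2 := h.dotProduct_mulVec_nonneg ⇑(hB.eigenvectorBasis i)
  rw [sub_mulVec, one_mulVec, smul_mulVec, hB.mulVec_eigenvectorBasis] at h2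
  simp only [star_trivial, dotProduct_sub, dotProduct_smul, smul_eq_mul, smul_smul,
    dot_self_eig hB i] at h2
  linarith

lemma trace_eq_sum_eig {d : ℕ} {B : Matrix (Fin d) (Fin d) ℝ} (hB : B.IsHermitian) :
    B.trace = ∑ i, hB.eigenvalues i := by
  conv_lhs => rw [hB.spectral_theorem]
  rw [Unitary.conjStarAlgAut_apply, trace_mul_cycle]
  have : (star (hB.eigenvectorUnitary : Matrix (Fin d) (Fin d) ℝ)) *
      (hB.eigenvectorUnitary : Matrix (Fin d) (Fin d) ℝ) = 1 :=
    mem_unitaryGroup_iff'.mp (hB.eigenvectorUnitary).2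
  rw [this, Matrix.one_mul, trace_diagonal]
  simp

lemma log_ge_aux {ε μ : ℝ} (hε : 0 < ε) (hε1 : ε < 1)
    (h1 : (1 - ε) * μ ≤ 1) (h2 : 1 ≤ (1 + ε) * μ) :
    (1 - ε ^ 2) * μ - 1 ≤ Real.log μ := by
  have hμ : 0 < μ := by nlinarith
  have hlog : 1 - 1/μ ≤ Real.log μ := by
    have := Real.log_le_sub_one_of_pos (show (0:ℝ) < 1/μ by positivity)
    rw [Real.log_div one_ne_zero hμ.ne', Real.log_one] at this
    linarith
  have hinv : μ * (1/μ) = 1 := by field_simp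
  nlinarith [mul_nonneg (sub_nonneg.2 h1) (sub_nonneg.2 h2)]

lemma prod_ge_key {d : ℕ} (hd : 0 < d) {c : ℝ} (hc : 0 < c) (μ : Fin d → ℝ)
    (hpos : ∀ i, 0 < μ i) (hb : ∀ i, c * μ i - 1 ≤ Real.log (μ i)) :
    c ^ d * ((∑ i, μ i) / d) ^ d ≤ ∏ i, μ i := by
  have hdR : (0:ℝ) < d := by exact_mod_cast hd
  have hs : 0 < (∑ i, μ i) / d := by
    apply div_pos _ hdR
    exact Finset.sum_pos (fun i _ => hpos i)
      (by simp [Finset.univ_nonempty_iff, Fin.pos_iff_nonempty.mp hd])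
  set s := (∑ i, μ i) / d with hs_def
  have h1 : c ^ d * s ^ d = (c * s) ^ d := (mul_pow c s d).symm
  have h2 : (c * s) ^ d = Real.exp (d * Real.log (c * s)) := by
    rw [Real.exp_nat_mul, Real.exp_log (by positivity)]
  have h3 : (d : ℝ) * Real.log (c * s) ≤ ∑ i, Real.log (μ i) := by
    have hl : Real.log (c * s) ≤ c * s - 1 := Real.log_le_sub_one_of_pos (by positivity)
    have heq : (d:ℝ) * (c * s - 1) = ∑ i, (c * μ i - 1) := by
      rw [Finset.sum_sub_distrib, ← Finset.mul_sum]
      simp only [Finset.sum_const, Finset.card_univ, Fintype.card_fin, nsmul_eq_mul, mul_one]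
      rw [hs_def, mul_sub, mul_one, mul_left_comm, mul_div_cancel₀ _ hdR.ne']
    calc (d : ℝ) * Real.log (c * s) ≤ (d:ℝ) * (c * s - 1) :=
          mul_le_mul_of_nonneg_left hl hdR.le
      _ = ∑ i, (c * μ i - 1) := heq
      _ ≤ ∑ i, Real.log (μ i) := Finset.sum_le_sum (fun i _ => hb i)
  have h4 : Real.exp (∑ i, Real.log (μ i)) = ∏ i, μ i := by
    rw [Real.exp_sum]
    exact Finset.prod_congr rfl (fun i _ => Real.exp_log (hpos i))
  calc c ^ d * s ^ d = Real.exp (d * Real.log (c * s)) := by rw [h1, h2]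
    _ ≤ Real.exp (∑ i, Real.log (μ i)) := Real.exp_le_exp.mpr h3
    _ = ∏ i, μ i := h4

open scoped MatrixOrder in
lemma exists_sqrt_mat {d : ℕ} (Sh : Matrix (Fin d) (Fin d) ℝ) (h : Sh.PosSemidef) :
    ∃ S : Matrix (Fin d) (Fin d) ℝ, S.PosSemidef ∧ S * S = Sh :=
  ⟨CFC.sqrt Sh, Matrix.nonneg_iff_posSemidef.mp (CFC.sqrt_nonneg Sh),
    CFC.sqrt_mul_sqrt_self Sh (Matrix.nonneg_iff_posSemidef.mpr h)⟩

/-- If `(1-ε)Σ ⪯ Σ̂ ⪯ (1+ε)Σ` in the Loewner order with `ε = 1/√(2d)`, then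
`det(ΣΣ̂⁻¹) / (tr(ΣΣ̂⁻¹)/d)^d ≥ (1 - 1/(2d))^d ≥ 1/2`. -/
theorem stmt16 (d : ℕ) (hd : 0 < d)
    (Sg Sh : Matrix (Fin d) (Fin d) ℝ) (hSg : Sg.PosDef) (hSh : Sh.PosDef)
    (hlo : (Sh - (1 - 1 / Real.sqrt (2 * d)) • Sg).PosSemidef)
    (hhi : ((1 + 1 / Real.sqrt (2 * d)) • Sg - Sh).PosSemidef) :
    (Sg * Sh⁻¹).det / ((Sg * Sh⁻¹).trace / d) ^ d ≥ (1 - 1 / (2 * (d : ℝ))) ^ d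
      ∧ (1 - 1 / (2 * (d : ℝ))) ^ d ≥ 1 / 2 := by
  have hdR : (0:ℝ) < d := Nat.cast_pos.mpr hd
  have h1d : (1:ℝ) ≤ d := Nat.one_le_cast.mpr hd
  have h2d : (0:ℝ) < 2 * d := by linarith
  set ε : ℝ := 1 / Real.sqrt (2 * d) with hε_def
  have hsqrt_pos : 0 < Real.sqrt (2 * (d:ℝ)) := Real.sqrt_pos.mpr h2d
  have hε0 : 0 < ε := div_pos one_pos hsqrt_pos
  have hε1 : ε < 1 := by
    rw [hε_def, div_lt_one hsqrt_pos]
    have : Real.sqrt 1 < Real.sqrt (2 * d) := Real.sqrt_lt_sqrt (by norm_num) (by linarith)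
    simpa using this
  have hε2 : ε ^ 2 = 1 / (2 * (d:ℝ)) := by
    rw [hε_def, div_pow, one_pow, Real.sq_sqrt h2d.le]
  -- matrix setup
  obtain ⟨S, hS, hSS⟩ := exists_sqrt_mat Sh hSh.posSemidef
  have hSdet : IsUnit S.det := by
    have hdet : S.det * S.det = Sh.det := by rw [← det_mul, hSS]
    have := hSh.det_pos
    refine isUnit_iff_ne_zero.mpr (fun h => ?_)
    rw [h, mul_zero] at hdet
    exact absurd hdet.symm (ne_of_gt this)
  have hSinvH : S⁻¹.IsHermitian := hS.1.inv
  set B := S⁻¹ * Sg * S⁻¹ with hB_def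
  have hB : B.IsHermitian := by
    have h := isHermitian_conjTranspose_mul_mul S⁻¹ hSg.1
    rwa [hSinvH.eq] at h
  have hShinv : Sh⁻¹ = S⁻¹ * S⁻¹ := by rw [← hSS, Matrix.mul_inv_rev]
  have hid : S⁻¹ * Sh * S⁻¹ = 1 := by
    rw [← hSS, ← Matrix.mul_assoc, Matrix.nonsing_inv_mul S hSdet, Matrix.one_mul,
      Matrix.mul_nonsing_inv S hSdet]
  have hconj : ∀ c : ℝ, S⁻¹ * (c • Sg) * S⁻¹ = c • B := by
    intro c
    rw [Matrix.mul_smul, Matrix.smul_mul, hB_def]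
  -- transformed PSD hypotheses
  have hlo' : ((1 : Matrix (Fin d) (Fin d) ℝ) - (1 - ε) • B).PosSemidef := by
    have h := hlo.mul_mul_conjTranspose_same S⁻¹
    rw [hSinvH.eq] at h
    rwa [Matrix.mul_sub, Matrix.sub_mul, hid, hconj] at h
  have hhi' : ((1 + ε) • B - (1 : Matrix (Fin d) (Fin d) ℝ)).PosSemidef := by
    have h := hhi.mul_mul_conjTranspose_same S⁻¹
    rw [hSinvH.eq] at h
    rwa [Matrix.mul_sub, Matrix.sub_mul, hid, hconj] at h
  -- eigenvalue bounds
  set μ := hB.eigenvalues with hμ_def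
  have hub : ∀ i, (1 - ε) * μ i ≤ 1 := fun i => eig_le hB hlo' i
  have hlb : ∀ i, 1 ≤ (1 + ε) * μ i := fun i => eig_ge hB hhi' i
  have hpos : ∀ i, 0 < μ i := by
    intro i
    nlinarith [hlb i, hε0, hε1]
  -- det and trace identities
  have hdet_eq : (Sg * Sh⁻¹).det = ∏ i, μ i := by
    have h1 : B.det = ∏ i, μ i := by simpa using hB.det_eq_prod_eigenvalues
    rw [hShinv, ← h1, hB_def]
    simp only [det_mul]
    ring
  have htr_eq : (Sg * Sh⁻¹).trace = ∑ i, μ i := by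
    rw [hShinv, ← Matrix.mul_assoc, trace_mul_cycle, ← hB_def, trace_eq_sum_eig hB]
  -- the key bound
  have hc : (0:ℝ) < 1 - ε ^ 2 := by nlinarith
  have hkey := prod_ge_key hd hc μ hpos
    (fun i => log_ge_aux hε0 hε1 (hub i) (hlb i))
  have hce : 1 - ε ^ 2 = 1 - 1 / (2 * (d:ℝ)) := by rw [hε2]
  have hsum : 0 < ∑ i, μ i := Finset.sum_pos (fun i _ => hpos i)
    (by simp [Finset.univ_nonempty_iff, Fin.pos_iff_nonempty.mp hd])
  constructor
  · rw [hdet_eq, htr_eq, ge_iff_le, le_div_iff₀ (pow_pos (div_pos hsum hdR) d), ← hce]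
    exact le_trans (le_of_eq (by ring)) hkey
  · have hble : (1:ℝ)/(2*(d:ℝ)) ≤ 2 := by
      rw [div_le_iff₀ h2d]; nlinarith
    have h := one_add_mul_le_pow (show (-2:ℝ) ≤ -(1/(2*(d:ℝ))) by linarith) d
    have e1 : (1:ℝ) + -(1/(2*(d:ℝ))) = 1 - 1/(2*(d:ℝ)) := by ring
    have e2 : (1:ℝ) + (d:ℝ) * -(1/(2*(d:ℝ))) = 1/2 := by
      field_simp
      ring
    rw [e1, e2] at h
    exact h
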